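/- arXiv:0810.0096 — 3 statements merged into one kernel-verified Lean document; each statement's English description precedes it below -/
import Mathlib

section
/- Let X be a finite topological space with specialisation preorder ⪯ (x ⪯ y iff the closure of {x} is contained in the closure of {y}). A subset Y ⊆ X is locally closed (i.e., the difference of two open sets) if and only if for all x, y, z ∈ X with x ⪯ y ⪯ z and x, z ∈ Y one has y ∈ Y. -/
/-- For a finite topological space `X` with specialisation preorder
`x ⪯ y ↔ closure {x} ⊆ closure {y}`, a subset `Y` is locally closed if and only if
it is convex for the specialisation preorder: whenever `x ⪯ y ⪯ z` with `x, z ∈ Y`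
one has `y ∈ Y`. -/
theorem stmt1 {X : Type*} [TopologicalSpace X] [Finite X] (Y : Set X) :
    IsLocallyClosed Y ↔
      ∀ x y z : X, closure {x} ⊆ closure {y} → closure {y} ⊆ closure {z} →
        x ∈ Y → z ∈ Y → y ∈ Y := by
  constructor
  · rintro ⟨U, Z, hU, hZ, rfl⟩ x y z hxy hyz hx hz
    have hyx : y ⤳ x := specializes_iff_closure_subset.mpr hxy
    have hzy : z ⤳ y := specializes_iff_closure_subset.mpr hyz
    exact ⟨hyx.mem_open hU hx.1, hzy.mem_closed hZ hz.2⟩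
  · intro h
    refine ⟨⋃ x ∈ Y, nhdsKer {x}, closure Y, ?_, isClosed_closure, ?_⟩
    · exact isOpen_biUnion fun x _ => isOpen_nhdsKer
    · ext y
      constructor
      · intro hy
        exact ⟨Set.mem_biUnion hy (subset_nhdsKer rfl), subset_closure hy⟩
      · rintro ⟨hyU, hyC⟩
        obtain ⟨x, hx, hyx⟩ := Set.mem_iUnion₂.mp hyU
        have hyx' : y ⤳ x := by simpa using mem_nhdsKer_iff_specializes.mp hyx
        have : closure Y = ⋃ z ∈ Y, closure {z} := by
          conv_lhs => rw [← Set.biUnion_of_singleton Y]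
          exact (Set.toFinite Y).closure_biUnion _
        rw [this] at hyC
        obtain ⟨z, hz, hzy⟩ := Set.mem_iUnion₂.mp hyC
        have hzy' : z ⤳ y := specializes_iff_mem_closure.mpr hzy
        exact h x y z (specializes_iff_closure_subset.mp hyx')
          (specializes_iff_closure_subset.mp hzy') hx hz
end

section
/- Let X be a finite T0 topological space and let m, M : Ch(X) → X be the maps on the order complex sending a point in the open simplex of a strict chain x₀ ≺ ⋯ ≺ xₙ to x₀ and xₙ respectively. If Y ⊆ X is closed, then m⁻¹(Y) is open and M⁻¹(Y) is closed in Ch(X); if Y ⊆ X is open, then m⁻¹(Y) is closed and M⁻¹(Y) is open; consequently, if Y is locally closed then both m⁻¹(Y) and M⁻¹(Y) are locally closed. -/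
/-- The order complex `Ch(X)` of a preordered set `X`, realised geometrically as the set
of weight functions `w : X → ℝ` with nonnegative values summing to `1` whose support is a
chain.  The open simplex of a strict chain `I` consists of those `w` supported exactly
on `I`. -/
def OrderComplex (X : Type*) [Preorder X] : Set (X → ℝ) :=
  {w | (∀ x, 0 ≤ w x) ∧ (∑ᶠ x, w x) = 1 ∧ IsChain (· ≤ ·) {x | w x ≠ 0}}

/-- The preimage `m⁻¹(Y)` in `Ch(X)` of a subset `Y ⊆ X` under the map `m` sending a
point of the open simplex of a strict chain `x₀ ≺ ⋯ ≺ xₙ` to the minimum `x₀`. -/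
def mPre (X : Type*) [Preorder X] (Y : Set X) : Set (X → ℝ) :=
  {w ∈ OrderComplex X | ∃ x ∈ Y, w x ≠ 0 ∧ ∀ y, w y ≠ 0 → x ≤ y}

/-- The preimage `M⁻¹(Y)` in `Ch(X)` of a subset `Y ⊆ X` under the map `M` sending a
point of the open simplex of a strict chain `x₀ ≺ ⋯ ≺ xₙ` to the maximum `xₙ`. -/
def MPre (X : Type*) [Preorder X] (Y : Set X) : Set (X → ℝ) :=
  {w ∈ OrderComplex X | ∃ x ∈ Y, w x ≠ 0 ∧ ∀ y, w y ≠ 0 → y ≤ x}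

set_option linter.unusedSectionVars false

section Aux
variable {X : Type*} [PartialOrder X] [Finite X]

lemma oc_exists_min {w : X → ℝ} (hw : w ∈ OrderComplex X) :
    ∃ x, w x ≠ 0 ∧ ∀ y, w y ≠ 0 → x ≤ y := by
  obtain ⟨hpos, hsum, hchain⟩ := hw
  have hne : ∃ x, w x ≠ 0 := by
    by_contra h
    push_neg at h
    have : w = 0 := funext fun x => h x
    rw [this] at hsum; simp at hsum
  classical
  haveI := Fintype.ofFinite X
  obtain ⟨x, hx⟩ := hne
  set s : Finset X := Finset.univ.filter (fun x => w x ≠ 0) with hs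
  have hsne : s.Nonempty := ⟨x, by simp [hs, hx]⟩
  obtain ⟨m, hm, hmin⟩ : ∃ m ∈ s, ∀ y ∈ s, ¬ y < m := by
    obtain ⟨m, hm⟩ := Finset.exists_minimal hsne
    exact ⟨m, hm.1, fun y hy hlt => hlt.not_ge (hm.2 hy hlt.le)⟩
  have hmne : w m ≠ 0 := by simpa [hs] using hm
  refine ⟨m, hmne, fun y hy => ?_⟩
  rcases eq_or_ne y m with rfl | hne'
  · exact le_refl _
  · rcases hchain hmne hy (fun h => hne' h.symm) with h | h
    · exact h
    · exact absurd (lt_of_le_of_ne h hne') (hmin y (by simp [hs, hy]))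

lemma oc_exists_max {w : X → ℝ} (hw : w ∈ OrderComplex X) :
    ∃ x, w x ≠ 0 ∧ ∀ y, w y ≠ 0 → y ≤ x := by
  obtain ⟨hpos, hsum, hchain⟩ := hw
  have hw' : w ∈ OrderComplex Xᵒᵈ := ⟨hpos, hsum, hchain.symm⟩
  obtain ⟨x, hx, hmin⟩ := oc_exists_min (X := Xᵒᵈ) hw'
  exact ⟨x, hx, hmin⟩

lemma mem_mPre_iff {Y : Set X} {w : OrderComplex X} {x₀ : X}
    (h1 : (w : X → ℝ) x₀ ≠ 0) (h2 : ∀ y, (w : X → ℝ) y ≠ 0 → x₀ ≤ y) :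
    (w : X → ℝ) ∈ mPre X Y ↔ x₀ ∈ Y := by
  constructor
  · rintro ⟨-, x, hxY, hx, hmin⟩
    have hxx : x = x₀ := le_antisymm (hmin _ h1) (h2 _ hx)
    rwa [hxx] at hxY
  · intro h; exact ⟨w.2, x₀, h, h1, h2⟩

lemma mem_MPre_iff {Y : Set X} {w : OrderComplex X} {x₀ : X}
    (h1 : (w : X → ℝ) x₀ ≠ 0) (h2 : ∀ y, (w : X → ℝ) y ≠ 0 → y ≤ x₀) :
    (w : X → ℝ) ∈ MPre X Y ↔ x₀ ∈ Y := by
  constructor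
  · rintro ⟨-, x, hxY, hx, hmax⟩
    have hxx : x = x₀ := le_antisymm (h2 _ hx) (hmax _ h1)
    rwa [hxx] at hxY
  · intro h; exact ⟨w.2, x₀, h, h1, h2⟩

lemma isOpen_exists (Y : Set X) :
    IsOpen {w : OrderComplex X | ∃ x ∈ Y, (w : X → ℝ) x ≠ 0} := by
  have : {w : OrderComplex X | ∃ x ∈ Y, (w : X → ℝ) x ≠ 0}
      = ⋃ x ∈ Y, {w : OrderComplex X | (w : X → ℝ) x ≠ 0} := by
    ext w; simp [Set.mem_iUnion]
  rw [this]
  refine isOpen_biUnion fun x _ => ?_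
  exact isOpen_ne.preimage ((continuous_apply x).comp continuous_subtype_val)

lemma isClosed_forall (Y : Set X) :
    IsClosed {w : OrderComplex X | ∀ x, (w : X → ℝ) x ≠ 0 → x ∈ Y} := by
  have : {w : OrderComplex X | ∀ x, (w : X → ℝ) x ≠ 0 → x ∈ Y}
      = ⋂ x ∈ Yᶜ, {w : OrderComplex X | (w : X → ℝ) x = 0} := by
    ext w
    simp only [Set.mem_setOf_eq, Set.mem_iInter, Set.mem_compl_iff]
    constructor
    · intro h x hx
      by_contra h0
      exact hx (h x h0)
    · intro h x hx
      by_contra hxY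
      exact hx (h x hxY)
  rw [this]
  refine isClosed_biInter fun x _ => ?_
  exact isClosed_eq (((continuous_apply x).comp continuous_subtype_val)) continuous_const

lemma mPre_lower {Y : Set X} (hY : IsLowerSet Y) :
    {w : OrderComplex X | (w : X → ℝ) ∈ mPre X Y}
      = {w : OrderComplex X | ∃ x ∈ Y, (w : X → ℝ) x ≠ 0} := by
  ext w
  obtain ⟨x₀, h1, h2⟩ := oc_exists_min w.2
  rw [Set.mem_setOf_eq, mem_mPre_iff h1 h2]
  constructor
  · intro h; exact ⟨x₀, h, h1⟩
  · rintro ⟨x, hxY, hx⟩; exact hY (h2 x hx) hxY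

lemma MPre_lower {Y : Set X} (hY : IsLowerSet Y) :
    {w : OrderComplex X | (w : X → ℝ) ∈ MPre X Y}
      = {w : OrderComplex X | ∀ x, (w : X → ℝ) x ≠ 0 → x ∈ Y} := by
  ext w
  obtain ⟨x₀, h1, h2⟩ := oc_exists_max w.2
  rw [Set.mem_setOf_eq, mem_MPre_iff h1 h2]
  constructor
  · intro h x hx; exact hY (h2 x hx) h
  · intro h; exact h x₀ h1

lemma mPre_upper {Y : Set X} (hY : IsUpperSet Y) :
    {w : OrderComplex X | (w : X → ℝ) ∈ mPre X Y}
      = {w : OrderComplex X | ∀ x, (w : X → ℝ) x ≠ 0 → x ∈ Y} := by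
  ext w
  obtain ⟨x₀, h1, h2⟩ := oc_exists_min w.2
  rw [Set.mem_setOf_eq, mem_mPre_iff h1 h2]
  constructor
  · intro h x hx; exact hY (h2 x hx) h
  · intro h; exact h x₀ h1

lemma MPre_upper {Y : Set X} (hY : IsUpperSet Y) :
    {w : OrderComplex X | (w : X → ℝ) ∈ MPre X Y}
      = {w : OrderComplex X | ∃ x ∈ Y, (w : X → ℝ) x ≠ 0} := by
  ext w
  obtain ⟨x₀, h1, h2⟩ := oc_exists_max w.2
  rw [Set.mem_setOf_eq, mem_MPre_iff h1 h2]
  constructor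
  · intro h; exact ⟨x₀, h, h1⟩
  · rintro ⟨x, hxY, hx⟩; exact hY (h2 x hx) hxY

lemma mPre_diff (U V : Set X) :
    {w : OrderComplex X | (w : X → ℝ) ∈ mPre X (U \ V)}
      = {w : OrderComplex X | (w : X → ℝ) ∈ mPre X U}
        \ {w : OrderComplex X | (w : X → ℝ) ∈ mPre X V} := by
  ext w
  obtain ⟨x₀, h1, h2⟩ := oc_exists_min w.2
  simp only [Set.mem_setOf_eq, Set.mem_diff, mem_mPre_iff h1 h2]

lemma MPre_diff (U V : Set X) :
    {w : OrderComplex X | (w : X → ℝ) ∈ MPre X (U \ V)}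
      = {w : OrderComplex X | (w : X → ℝ) ∈ MPre X U}
        \ {w : OrderComplex X | (w : X → ℝ) ∈ MPre X V} := by
  ext w
  obtain ⟨x₀, h1, h2⟩ := oc_exists_max w.2
  simp only [Set.mem_setOf_eq, Set.mem_diff, mem_MPre_iff h1 h2]

end Aux

/-- Let `X` be a finite T₀ space, identified with a finite partial order carrying the
Alexandrov topology (so closed subsets are the lower sets, open subsets the upper sets,
and locally closed subsets the differences of two upper sets).  If `Y ⊆ X` is closed,
then `m⁻¹(Y)` is open and `M⁻¹(Y)` is closed in the order complex `Ch(X)`; if `Y` is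
open, then `m⁻¹(Y)` is closed and `M⁻¹(Y)` is open; consequently, if `Y` is locally
closed, then `m⁻¹(Y)` and `M⁻¹(Y)` are locally closed in `Ch(X)`. -/
theorem stmt3 (X : Type*) [PartialOrder X] [Finite X] (Y : Set X) :
    (IsLowerSet Y →
      IsOpen {w : OrderComplex X | (w : X → ℝ) ∈ mPre X Y} ∧
      IsClosed {w : OrderComplex X | (w : X → ℝ) ∈ MPre X Y}) ∧
    (IsUpperSet Y →
      IsClosed {w : OrderComplex X | (w : X → ℝ) ∈ mPre X Y} ∧
      IsOpen {w : OrderComplex X | (w : X → ℝ) ∈ MPre X Y}) ∧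
    ((∃ U V : Set X, IsUpperSet U ∧ IsUpperSet V ∧ Y = U \ V) →
      IsLocallyClosed {w : OrderComplex X | (w : X → ℝ) ∈ mPre X Y} ∧
      IsLocallyClosed {w : OrderComplex X | (w : X → ℝ) ∈ MPre X Y}) := by

  refine ⟨fun hY => ?_, fun hY => ?_, ?_⟩
  · rw [mPre_lower hY, MPre_lower hY]
    exact ⟨isOpen_exists Y, isClosed_forall Y⟩
  · rw [mPre_upper hY, MPre_upper hY]
    exact ⟨isClosed_forall Y, isOpen_exists Y⟩
  · rintro ⟨U, V, hU, hV, rfl⟩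
    constructor
    · rw [mPre_diff U V, mPre_upper hU, mPre_upper hV, Set.diff_eq, Set.inter_comm]
      exact ((isClosed_forall V).isOpen_compl.isLocallyClosed).inter
        ((isClosed_forall U).isLocallyClosed)
    · rw [MPre_diff U V, MPre_upper hU, MPre_upper hV, Set.diff_eq, Set.inter_comm]
      exact ((isOpen_exists V).isClosed_compl.isLocallyClosed).inter
        ((isOpen_exists U).isLocallyClosed)
end

section
/- Let 𝔗 be a triangulated category, 𝕀 a homological ideal in 𝔗 with enough 𝕀-projective objects, and F : 𝔗 → 𝒜 a universal 𝕀-exact stable homological functor. If 𝕀² ≠ 0, then there exist objects B, D in 𝔗 with F(B) ≅ F(D) in 𝒜 but B ≇ D in 𝔗. -/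
open CategoryTheory Limits Pretriangulated

universe u v w w' x x'

section Aux

variable {C : Type u} [Category.{v} C] [Preadditive C] [HasZeroObject C] [HasShift C ℤ]
    [∀ n : ℤ, (CategoryTheory.shiftFunctor C n).Additive] [Pretriangulated C]
    {A : Type w} [Category.{w'} A] [Abelian A] [HasShift A ℤ]

/-- If `F` kills a morphism, it kills its shifts. -/
lemma stmt17_aux_FZ (F : C ⥤ A) [F.IsHomological] [F.CommShift ℤ] (m : ℤ) {X Y : C}
    (x : X ⟶ Y) (hx : F.map x = 0) : F.map ((shiftFunctor C m).map x) = 0 := by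
  have h := (F.commShiftIso m).hom.naturality x
  have h2 : F.map ((shiftFunctor C m).map x)
      = (F.commShiftIso m).hom.app X ≫ (F ⋙ shiftFunctor A m).map x
        ≫ (F.commShiftIso m).inv.app Y := by
    rw [← Category.assoc, ← h]
    simp only [Functor.comp_map, Category.assoc, Iso.hom_inv_id_app, Category.comp_id]
  rw [h2]
  have h3 : (F ⋙ shiftFunctor A m).map x = 0 := by
    simp only [Functor.comp_map, hx, Functor.map_zero]
  rw [h3, zero_comp, comp_zero]

/-- Given a distinguished triangle `W → P → A → R` (as `invRotate` data) on which `F`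
kills the two connecting maps, together with a partial splitting, `F P` is a biproduct
of `F A` and `F W`. -/
lemma stmt17_aux_biprod (F : C ⥤ A) [F.IsHomological] [F.CommShift ℤ]
    (T : Triangle C) (hT : T ∈ distTriang C)
    (hmono : Mono (F.map T.mor₁))
    (σ : F.obj T.obj₃ ⟶ F.obj T.obj₂) (hσ : σ ≫ F.map T.mor₂ = 𝟙 _) :
    Nonempty (F.obj T.obj₂ ≅ F.obj T.obj₃ ⊞ F.obj T.obj₁) := by
  have S := (shortComplexOfDistTriangle T hT).map F
  have hS : ((shortComplexOfDistTriangle T hT).map F).Exact := F.map_distinguished_exact T hT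
  -- kernel property
  have : Mono ((shortComplexOfDistTriangle T hT).map F).f := hmono
  have klim := hS.fIsKernel
  have hx : (𝟙 (F.obj T.obj₂) - F.map T.mor₂ ≫ σ) ≫ F.map T.mor₂ = 0 := by
    simp only [Preadditive.sub_comp, Category.id_comp, Category.assoc, hσ, Category.comp_id,
      sub_self]
  obtain ⟨π₂, hπ₂₀⟩ := KernelFork.IsLimit.lift' klim _ hx
  change F.obj T.obj₂ ⟶ F.obj T.obj₁ at π₂
  have hπ₂ : π₂ ≫ F.map T.mor₁ = 𝟙 (F.obj T.obj₂) - F.map T.mor₂ ≫ σ := by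
    exact hπ₂₀
  have hcomp : F.map T.mor₁ ≫ F.map T.mor₂ = 0 := by
    rw [← F.map_comp, comp_distTriang_mor_zero₁₂ T hT, F.map_zero]
  refine ⟨(biprod.uniqueUpToIso _ _ (isBinaryBilimitOfTotal
    (BinaryBicone.mk (F.obj T.obj₂) (F.map T.mor₂) π₂ σ (F.map T.mor₁) hσ ?_ ?_ ?_) ?_))⟩
  · -- inl_snd : σ ≫ π₂ = 0
    rw [← cancel_mono (F.map T.mor₁), Category.assoc, hπ₂, zero_comp]
    simp only [Preadditive.comp_sub, Category.comp_id, ← Category.assoc, hσ,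
      Category.id_comp, sub_self]
  · -- inr_fst : F.map T.mor₁ ≫ F.map T.mor₂ = 0
    exact hcomp
  · -- inr_snd : F.map T.mor₁ ≫ π₂ = 𝟙
    rw [← cancel_mono (F.map T.mor₁), Category.assoc, hπ₂, Category.id_comp]
    simp only [Preadditive.comp_sub, Category.comp_id, ← Category.assoc, hcomp,
      zero_comp, sub_zero]
  · -- total
    dsimp
    change F.map T.mor₂ ≫ σ + π₂ ≫ F.map T.mor₁ = 𝟙 (F.obj T.obj₂)
    rw [hπ₂]
    abel
end Aux

/-- Let `𝔗` be a triangulated category, `𝕀` a homological ideal in `𝔗` (the kernel on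
morphisms of a stable homological functor) with enough `𝕀`-projective objects, and let
`F : 𝔗 → 𝒜` be a universal `𝕀`-exact stable homological functor.  If `𝕀² ≠ 0` then
there are objects `B`, `D` of `𝔗` with `F(B) ≅ F(D)` that are not isomorphic in `𝔗`. -/
theorem stmt17
    {C : Type u} [Category.{v} C] [Preadditive C] [HasZeroObject C] [HasShift C ℤ]
    [∀ n : ℤ, (CategoryTheory.shiftFunctor C n).Additive] [Pretriangulated C]
    {A : Type w} [Category.{w'} A] [Abelian A] [HasShift A ℤ]
    -- the ideal 𝕀
    (I : ∀ X Y : C, AddSubgroup (X ⟶ Y))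
    (hI_left : ∀ {X Y Z : C} (f : X ⟶ Y) (g : Y ⟶ Z), g ∈ I Y Z → f ≫ g ∈ I X Z)
    (hI_right : ∀ {X Y Z : C} (f : X ⟶ Y) (g : Y ⟶ Z), f ∈ I X Y → f ≫ g ∈ I X Z)
    -- F is a stable homological functor defining 𝕀, so 𝕀 is a homological ideal
    (F : C ⥤ A) [F.IsHomological] [F.CommShift ℤ]
    (hker : ∀ {X Y : C} (f : X ⟶ Y), f ∈ I X Y ↔ F.map f = 0)
    -- there are enough 𝕀-projective objects
    (henough : ∀ X : C, ∃ (P N : C) (π : P ⟶ X) (ι : X ⟶ N) (δ : N ⟶ P⟦(1 : ℤ)⟧),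
      (Triangle.mk π ι δ ∈ distTriang C) ∧ ι ∈ I X N ∧
      ∀ (Y : C) (f : P ⟶ Y), f ∈ I P Y → f = 0)
    -- F is universal: every 𝕀-exact homological functor factors through F,
    -- uniquely up to natural isomorphism
    (huniv : ∀ {B : Type x} [Category.{x'} B] [Abelian B] (G : C ⥤ B),
      G.IsHomological → (∀ {X Y : C} (f : X ⟶ Y), f ∈ I X Y → G.map f = 0) →
      (∃ H : A ⥤ B, Nonempty (F ⋙ H ≅ G)) ∧
      (∀ H H' : A ⥤ B, Nonempty (F ⋙ H ≅ G) → Nonempty (F ⋙ H' ≅ G) →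
        Nonempty (H ≅ H')))
    -- 𝕀² ≠ 0
    (hsq : ∃ (X Y Z : C) (f : X ⟶ Y) (g : Y ⟶ Z), f ∈ I X Y ∧ g ∈ I Y Z ∧ f ≫ g ≠ 0) :
    ∃ B D : C, Nonempty (F.obj B ≅ F.obj D) ∧ IsEmpty (B ≅ D) := by
  obtain ⟨X₀, Y₀, Z₀, f, g, hfI, hgI, hfg⟩ := hsq
  -- first step of a projective resolution of X₀
  obtain ⟨Q, N₁, q, a, d, hT1, haI, hQ⟩ := henough X₀
  -- second step : resolve N₁
  obtain ⟨Q', N₂, q', a', d', hT2, ha'I, hQ'⟩ := henough N₁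
  -- the "two-step projective" P, fitting in a triangle Q ⟶ P ⟶ Q' ⟶ Q⟦1⟧
  obtain ⟨P, u, v, hTw⟩ := distinguished_cocone_triangle₂ (q' ≫ d)
  set Tw : Triangle C := Triangle.mk u v (q' ≫ d) with hTwdef
  -- construct p : P ⟶ X₀ by completing a morphism between the rotated triangles
  have hTw2 : Tw.rotate.rotate ∈ distTriang C :=
    rot_of_distTriang _ (rot_of_distTriang _ hTw)
  have hT12 : (Triangle.mk q a d).rotate.rotate ∈ distTriang C :=
    rot_of_distTriang _ (rot_of_distTriang _ hT1)
  obtain ⟨c, hc₁, hc₂⟩ := complete_distinguished_triangle_morphism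
    Tw.rotate.rotate (Triangle.mk q a d).rotate.rotate hTw2 hT12 q' (𝟙 _)
    (by exact Category.comp_id (q' ≫ d))
  change P⟦(1 : ℤ)⟧ ⟶ X₀⟦(1 : ℤ)⟧ at c
  set p : P ⟶ X₀ := (shiftFunctor C (1 : ℤ)).preimage c with hpdef
  have hcp : (shiftFunctor C (1 : ℤ)).map p = c := (shiftFunctor C (1 : ℤ)).map_preimage c
  have hup : u ≫ p = q := by
    apply (shiftFunctor C (1 : ℤ)).map_injective
    rw [Functor.map_comp, hcp]
    have := hc₁
    change (-(shiftFunctor C (1 : ℤ)).map u) ≫ c = 𝟙 _ ≫ (-(shiftFunctor C (1 : ℤ)).map q) at this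
    rw [Category.id_comp, Preadditive.neg_comp, neg_inj] at this
    exact this
  have hpa : p ≫ a = v ≫ q' := by
    apply (shiftFunctor C (1 : ℤ)).map_injective
    rw [Functor.map_comp, Functor.map_comp, hcp]
    have := hc₂
    change (-(shiftFunctor C (1 : ℤ)).map v) ≫ (shiftFunctor C (1 : ℤ)).map q'
      = c ≫ (-(shiftFunctor C (1 : ℤ)).map a) at this
    rw [Preadditive.neg_comp, Preadditive.comp_neg, neg_inj] at this
    exact this.symm
  -- the triangle P ⟶ X₀ ⟶ R ⟶ P⟦1⟧
  obtain ⟨R, ρ, δR, hTp⟩ := distinguished_cocone_triangle p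
  set Tp : Triangle C := Triangle.mk p ρ δR with hTpdef
  -- complete (u, 𝟙) to a morphism of triangles T1 ⟶ Tp
  obtain ⟨n, hn₁, hn₂⟩ := complete_distinguished_triangle_morphism
    (Triangle.mk q a d) Tp hT1 hTp u (𝟙 _)
    (by show q ≫ 𝟙 X₀ = u ≫ p; rw [Category.comp_id, hup])
  change N₁ ⟶ R at n
  have hρ : ρ = a ≫ n := by
    have hn₁' : a ≫ n = 𝟙 X₀ ≫ ρ := hn₁
    rw [Category.id_comp] at hn₁'
    exact hn₁'.symm
  have hFρ : F.map ρ = 0 := by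
    rw [hρ, F.map_comp, (hker a).1 haI, zero_comp]
  -- q' ≫ n = 0
  have hq'n : q' ≫ n = 0 := by
    have hn₂' : d ≫ (shiftFunctor C (1 : ℤ)).map u = n ≫ δR := hn₂
    have h1 : (q' ≫ n) ≫ δR = 0 := by
      rw [Category.assoc, ← hn₂', ← Category.assoc]
      exact comp_distTriang_mor_zero₃₁ Tw hTw
    obtain ⟨y, hy⟩ := Triangle.coyoneda_exact₃ Tp hTp (q' ≫ n) h1
    change Q' ⟶ X₀ at y
    have hya : y ≫ a = 0 := hQ' _ _ (hI_left y a haI)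
    have hy' : q' ≫ n = y ≫ ρ := hy
    rw [hy', hρ, ← Category.assoc, hya, zero_comp]
  -- F.map n = 0
  have hFq'epi : Epi (F.map q') := by
    have hS2 := F.map_distinguished_exact _ hT2
    exact hS2.epi_f ((hker a').1 ha'I)
  have hFn : F.map n = 0 := by
    have : F.map q' ≫ F.map n = 0 := by
      rw [← F.map_comp, hq'n, F.map_zero]
    exact zero_of_epi_comp (F.map q') this
  -- the inverse rotation of Tp
  have hTp' : Tp.invRotate ∈ distTriang C := inv_rot_of_distTriang _ hTp
  have hTp'' : Tp.invRotate.invRotate ∈ distTriang C := inv_rot_of_distTriang _ hTp'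
  -- F kills the first map of the double inverse rotation
  have hz : F.map Tp.invRotate.invRotate.mor₁ = 0 := by
    have h0 : F.map Tp.invRotate.mor₃ = 0 := by
      have : Tp.invRotate.mor₃
          = ρ ≫ (shiftEquiv C (1 : ℤ)).counitIso.inv.app R := rfl
      erw [this, F.map_comp, hFρ, zero_comp]
    have : Tp.invRotate.invRotate.mor₁
        = -((shiftFunctor C (-1 : ℤ)).map Tp.invRotate.mor₃)
          ≫ (shiftEquiv C (1 : ℤ)).unitIso.inv.app Tp.invRotate.obj₁ := rfl
    erw [this, Functor.map_neg, F.map_comp, stmt17_aux_FZ F (-1 : ℤ) _ h0, zero_comp, neg_zero]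
  have hmono : Mono (F.map Tp.invRotate.mor₁) :=
    (F.map_distinguished_exact _ hTp'').mono_g hz
  -- epi of F.map q
  have hFqepi : Epi (F.map q) :=
    (F.map_distinguished_exact _ hT1).epi_f ((hker a).1 haI)
  -- the morphism of inverse-rotated triangles
  have hψ : (Triangle.mk q a d).invRotate.mor₁ ≫ u
      = (shiftFunctor C (-1 : ℤ)).map n ≫ Tp.invRotate.mor₁ := by
    exact ((invRotate C).map (Triangle.homMk (Triangle.mk q a d) Tp u (𝟙 _) n
      (by show q ≫ 𝟙 X₀ = u ≫ p; rw [Category.comp_id, hup]) hn₁ hn₂)).comm₁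
  -- the splitting σ
  have hT1' : (Triangle.mk q a d).invRotate ∈ distTriang C := inv_rot_of_distTriang _ hT1
  have hepi1 : Epi (((shortComplexOfDistTriangle _ hT1').map F).g) := hFqepi
  have colim := ((F.map_distinguished_exact _ hT1')).gIsCokernel
  have w0 : ((shortComplexOfDistTriangle _ hT1').map F).f ≫ F.map u = 0 := by
    show F.map ((Triangle.mk q a d).invRotate.mor₁) ≫ F.map u = 0
    erw [← F.map_comp, hψ, F.map_comp, stmt17_aux_FZ F (-1 : ℤ) n hFn, zero_comp]
  obtain ⟨σ, hσ₀⟩ := CokernelCofork.IsColimit.desc' colim (F.map u) w0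
  change F.obj X₀ ⟶ F.obj P at σ
  have hσ₁ : F.map q ≫ σ = F.map u := by exact hσ₀
  have hσ : σ ≫ F.map Tp.invRotate.mor₂ = 𝟙 (F.obj X₀) := by
    have : σ ≫ F.map p = 𝟙 (F.obj X₀) := by
      rw [← cancel_epi (F.map q), ← Category.assoc, hσ₁, ← F.map_comp, hup, Category.comp_id]
    exact this
  obtain ⟨iso1⟩ := stmt17_aux_biprod F Tp.invRotate hTp' hmono σ hσ
  -- the direct sum comparison object E
  obtain ⟨E, jE, pE, hTe⟩ :=
    distinguished_cocone_triangle₂ (0 : X₀ ⟶ (Tp.invRotate.obj₁)⟦(1 : ℤ)⟧)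
  set Te : Triangle C := Triangle.mk jE pE 0 with hTedef
  obtain ⟨s, hs⟩ := Triangle.coyoneda_exact₃ Te hTe (𝟙 X₀) (by
    show 𝟙 X₀ ≫ (0 : X₀ ⟶ _) = 0
    simp)
  change X₀ ⟶ E at s
  have hs' : 𝟙 X₀ = s ≫ pE := hs
  have hTe' : Te.invRotate ∈ distTriang C := inv_rot_of_distTriang _ hTe
  have hzE : F.map Te.invRotate.mor₁ = 0 := by
    have : Te.invRotate.mor₁
        = -((shiftFunctor C (-1 : ℤ)).map Te.mor₃)
          ≫ (shiftEquiv C (1 : ℤ)).unitIso.inv.app Te.obj₁ := rfl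
    rw [this]
    have : Te.mor₃ = (0 : Te.obj₃ ⟶ Te.obj₁⟦(1 : ℤ)⟧) := rfl
    erw [this, Functor.map_zero, zero_comp, neg_zero, F.map_zero]
  have hmonoE : Mono (F.map Te.mor₁) :=
    (F.map_distinguished_exact _ hTe').mono_g hzE
  have hσE : F.map s ≫ F.map Te.mor₂ = 𝟙 (F.obj X₀) := by
    show F.map s ≫ F.map pE = 𝟙 (F.obj X₀)
    rw [← F.map_comp, ← hs', F.map_id]
  obtain ⟨iso2⟩ := stmt17_aux_biprod F Te hTe hmonoE (F.map s) hσE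
  -- conclusion
  refine ⟨P, E, ⟨iso1.trans iso2.symm⟩, ?_⟩
  constructor
  intro θ
  apply hfg
  have hsr : (s ≫ θ.inv) ≫ (θ.hom ≫ pE) = 𝟙 X₀ := by
    rw [Category.assoc, ← Category.assoc θ.inv, θ.inv_hom_id, Category.id_comp, ← hs']
  have hα0 : u ≫ ((θ.hom ≫ pE) ≫ f) = 0 :=
    hQ _ _ (hI_left _ _ (hI_left _ _ hfI))
  obtain ⟨b1, hb1⟩ := Triangle.yoneda_exact₂ Tw hTw ((θ.hom ≫ pE) ≫ f) hα0
  change Q' ⟶ Y₀ at b1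
  have hb1' : (θ.hom ≫ pE) ≫ f = v ≫ b1 := hb1
  have hb1g : b1 ≫ g = 0 := hQ' _ _ (hI_left b1 g hgI)
  calc f ≫ g = ((s ≫ θ.inv) ≫ (θ.hom ≫ pE)) ≫ (f ≫ g) := by
        rw [hsr, Category.id_comp]
    _ = (s ≫ θ.inv) ≫ ((θ.hom ≫ pE) ≫ f) ≫ g := by
        simp only [Category.assoc]
    _ = (s ≫ θ.inv) ≫ (v ≫ b1) ≫ g := by rw [hb1']
    _ = 0 := by simp only [Category.assoc, hb1g, comp_zero]
end
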